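/- Let α < 0, A > 0 and k > 0, and define F(x) = [1 + k x^{−A}]^{1/α} for x ∈ (0, +∞). Then F is the cumulative distribution function of a positive absolutely continuous random variable (it is continuous, nondecreasing, with lim_{x→0⁺} F(x) = 0 and lim_{x→+∞} F(x) = 1), F is differentiable on (0, +∞) with derivative f, and its α-generalized reversed aging intensity function is constant: L̆_α(x) = A for all x > 0. -/

import Mathlib

/-- The α-generalized reversed aging intensity function. -/
noncomputable def genRAI (F f : ℝ → ℝ) (α x : ℝ) : ℝ :=
  if α = 0 then -(x * f x) / (F x * Real.log (F x))
  else α * x * F x ^ (α - 1) * f x / (1 - F x ^ α)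

/-- The cdf `F(x) = [1 + k x^(-A)]^(1/α)` arising from the constant reversed aging
intensity `L̆_α ≡ A` for `α < 0`. -/
noncomputable def Fconst (α A k : ℝ) (x : ℝ) : ℝ :=
  (1 + k * x ^ (-A)) ^ (1/α)

/-- For `α < 0`, `A > 0` and `k > 0`, `F(x) = [1 + k x^(-A)]^(1/α)` is the cdf of a
positive absolutely continuous random variable (continuous, nondecreasing on `(0,∞)`,
with limits `0` at `0⁺` and `1` at `+∞`), it is differentiable on `(0,∞)` with
derivative `f`, and its α-generalized reversed aging intensity is constant:
`L̆_α(x) = A` for all `x > 0`. -/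
theorem stmt_13 (α A k : ℝ) (hα : α < 0) (hA : 0 < A) (hk : 0 < k) :
    ContinuousOn (Fconst α A k) (Set.Ioi 0) ∧
    MonotoneOn (Fconst α A k) (Set.Ioi 0) ∧
    Filter.Tendsto (Fconst α A k) (nhdsWithin (0:ℝ) (Set.Ioi 0)) (nhds 0) ∧
    Filter.Tendsto (Fconst α A k) Filter.atTop (nhds 1) ∧
    ∃ f : ℝ → ℝ, (∀ x > (0:ℝ), HasDerivAt (Fconst α A k) (f x) x) ∧
      ∀ x > (0:ℝ), genRAI (Fconst α A k) f α x = A := by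
  have hα0 : α ≠ 0 := ne_of_lt hα
  set g : ℝ → ℝ := fun x => 1 + k * x ^ (-A) with hg
  have hgpos : ∀ x > (0:ℝ), 1 < g x := by
    intro x hx
    have : 0 < k * x ^ (-A) := mul_pos hk (Real.rpow_pos_of_pos hx _)
    simp [hg]; linarith
  -- derivative
  have hderiv : ∀ x > (0:ℝ), HasDerivAt (Fconst α A k)
      ((k * (-A * x ^ (-A - 1))) * (1/α) * g x ^ (1/α - 1)) x := by
    intro x hx
    have h1 : HasDerivAt (fun y : ℝ => y ^ (-A)) (-A * x ^ (-A - 1)) x :=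
      Real.hasDerivAt_rpow_const (Or.inl (ne_of_gt hx))
    have h2 : HasDerivAt g (k * (-A * x ^ (-A - 1))) x := by
      simpa [hg] using ((h1.const_mul k).const_add 1)
    have h3 := h2.rpow_const (p := 1/α) (Or.inl (by have := hgpos x hx; positivity))
    exact h3
  refine ⟨?_, ?_, ?_, ?_, ?_⟩
  · intro x hx
    exact ((hderiv x hx).continuousAt).continuousWithinAt
  · intro x hx y hy hxy
    have hx0 : (0:ℝ) < x := hx
    have hy0 : (0:ℝ) < y := hy
    have h1 : y ^ (-A) ≤ x ^ (-A) :=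
      Real.rpow_le_rpow_of_nonpos hx0 hxy (by linarith)
    have h2 : g y ≤ g x := by
      simp only [hg]; nlinarith
    have hgy : 0 < g y := lt_trans one_pos (hgpos y hy0)
    exact Real.rpow_le_rpow_of_nonpos hgy h2 (by
      exact le_of_lt (div_neg_of_pos_of_neg one_pos hα))
  · -- limit at 0+
    have hinner : Filter.Tendsto (fun x : ℝ => x ^ (-A)) (nhdsWithin 0 (Set.Ioi 0)) Filter.atTop := by
      have : Filter.Tendsto (fun x : ℝ => (x⁻¹) ^ A) (nhdsWithin 0 (Set.Ioi 0)) Filter.atTop :=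
        (tendsto_rpow_atTop hA).comp tendsto_inv_nhdsGT_zero
      refine this.congr' ?_
      filter_upwards [self_mem_nhdsWithin] with x hx
      rw [← Real.rpow_neg_one, ← Real.rpow_mul (le_of_lt hx)]
      norm_num
    have hg_top : Filter.Tendsto g (nhdsWithin 0 (Set.Ioi 0)) Filter.atTop := by
      exact Filter.tendsto_atTop_add_const_left _ 1 (hinner.const_mul_atTop hk)
    have houter : Filter.Tendsto (fun y : ℝ => y ^ (1/α)) Filter.atTop (nhds 0) := by
      have := tendsto_rpow_neg_atTop (y := -(1/α))
        (neg_pos.mpr (div_neg_of_pos_of_neg one_pos hα))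
      simpa using this
    exact houter.comp hg_top
  · -- limit at +∞
    have hinner : Filter.Tendsto (fun x : ℝ => k * x ^ (-A)) Filter.atTop (nhds 0) := by
      simpa using ((tendsto_rpow_neg_atTop hA).const_mul k)
    have hg1 : Filter.Tendsto g Filter.atTop (nhds 1) := by
      simpa using hinner.const_add 1
    have hcont : ContinuousAt (fun y : ℝ => y ^ (1/α)) 1 :=
      (Real.continuousAt_rpow_const 1 (1/α) (Or.inl one_ne_zero))
    have heq : Fconst α A k = (fun y : ℝ => y ^ (1/α)) ∘ g := rfl
    rw [heq]
    simpa using hcont.tendsto.comp hg1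
  · refine ⟨fun x => (k * (-A * x ^ (-A - 1))) * (1/α) * g x ^ (1/α - 1),
      fun x hx => hderiv x hx, ?_⟩
    intro x hx
    have hgx : 0 < g x := lt_trans one_pos (hgpos x hx)
    have hFα : Fconst α A k x ^ α = g x := by
      rw [Fconst, ← Real.rpow_mul hgx.le, one_div, inv_mul_cancel₀ hα0, Real.rpow_one]
    have hpq : (g x ^ (1/α)) ^ (α - 1) * g x ^ (1/α - 1) = 1 := by
      rw [← Real.rpow_mul hgx.le, ← Real.rpow_add hgx]
      have : 1/α * (α - 1) + (1/α - 1) = 0 := by field_simp; ring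
      rw [this, Real.rpow_zero]
    have hxx : x ^ (-A) = x * x ^ (-A - 1) := by
      conv_lhs => rw [show -A = 1 + (-A - 1) by ring]
      rw [Real.rpow_add hx, Real.rpow_one]
    have ht : x ^ (-A - 1) ≠ 0 := ne_of_gt (Real.rpow_pos_of_pos hx _)
    have hF1 : Fconst α A k x ^ (α - 1) = (g x ^ (1/α)) ^ (α - 1) := rfl
    rw [genRAI, if_neg hα0, hFα, hF1]
    have hden : 1 - g x = -(k * x ^ (-A)) := by simp [hg]
    rw [hden, hxx]
    set P := (g x ^ (1/α)) ^ (α - 1)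
    set Q := g x ^ (1/α - 1)
    set t := x ^ (-A - 1)
    field_simp
    linear_combination hpq
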